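/- Erasure soundness of bidirectional typing: if Γ ⊢ P ÷ J is derivable in the bidirectional process typing system, then |Γ| ⊢ |P| ÷ |J| is derivable in the non-bidirectional typing system, where |P| erases type annotations and |·| replaces the directional judgments ⇒ and ⇐ by a single colon-typing judgment. -/

import Mathlib

set_option linter.unusedVariables false
set_option autoImplicit false

namespace DRSAX

/-! # A formalization of DRSAX (Somayyajula & Pfenning, "Dependent Type Refinements for Futures")

Addresses, labels, definition names. -/

abbrev Label := String
abbrev Addr := ℕ
abbrev DefName := String

/-! ## Assertion logic: first-order terms and assertions -/

inductive Tm : Type where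
  | var : Addr → Tm
  | unit : Tm
  | pair : Tm → Tm → Tm
  | app : Tm → Tm → Tm          -- M ‵ N  (function application)
  | tag : Label → Tm → Tm       -- k · M
  | proj : Tm → Label → Tm      -- M.k
  | fn : String → Tm → Tm       -- uninterpreted function symbols (theory extension)

inductive Assertion : Type where
  | fls : Assertion
  | tru : Assertion
  | eq : Tm → Tm → Assertion
  | isTag : Label → Tm → Assertion
  | conj : Assertion → Assertion → Assertion
  | impl : Assertion → Assertion → Assertion
  | all : (Tm → Assertion) → Assertion

/-- Models of the assertion logic: uninterpreted functions, with the value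
constructors subject to the theory of non-cyclic data structures
(injectivity, distinctness, and a rank function precluding cycles). -/
structure AModel where
  D : Type
  unitI : D
  pairI : D → D → D
  appI : D → D → D
  tagI : Label → D → D
  projI : D → Label → D
  fnI : String → D → D
  rank : D → ℕ
  pair_inj : ∀ a b a' b', pairI a b = pairI a' b' → a = a' ∧ b = b'
  tag_inj : ∀ k k' a a', tagI k a = tagI k' a' → k = k' ∧ a = a'
  unit_ne_pair : ∀ a b, unitI ≠ pairI a b
  unit_ne_tag : ∀ k a, unitI ≠ tagI k a
  pair_ne_tag : ∀ a b k c, pairI a b ≠ tagI k c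
  rank_pair_l : ∀ a b, rank a < rank (pairI a b)
  rank_pair_r : ∀ a b, rank b < rank (pairI a b)
  rank_tag : ∀ k a, rank a < rank (tagI k a)

def Tm.eval (M : AModel) (ρ : Addr → M.D) : Tm → M.D
  | .var a => ρ a
  | .unit => M.unitI
  | .pair s t => M.pairI (s.eval M ρ) (t.eval M ρ)
  | .app s t => M.appI (s.eval M ρ) (t.eval M ρ)
  | .tag k t => M.tagI k (t.eval M ρ)
  | .proj t k => M.projI (t.eval M ρ) k
  | .fn f t => M.fnI f (t.eval M ρ)

def Assertion.sat (M : AModel) (ρ : Addr → M.D) : Assertion → Prop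
  | .fls => False
  | .tru => True
  | .eq s t => s.eval M ρ = t.eval M ρ
  | .isTag k t => ∃ d, t.eval M ρ = M.tagI k d
  | .conj φ ψ => φ.sat M ρ ∧ ψ.sat M ρ
  | .impl φ ψ => φ.sat M ρ → ψ.sat M ρ
  | .all f => ∀ t : Tm, (f t).sat M ρ

/-! ## Types -/

mutual
inductive Ty : Type where
  | unit : Ty                                -- 1
  | tensor : RTy → (Tm → Ty) → Ty            -- (x : A|φ) ⊗ B(x)
  | plus : List Label → (Label → Ty) → Ty    -- ⊕{ℓ : A_ℓ}
  | arrow : RTy → (Tm → RTy) → Ty            -- (x : A|φ) → (B(x)|ψ)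
  | withR : List Label → (Label → RTy) → Ty  -- &{ℓ : A_ℓ|φ_ℓ}
  | tvar : ℕ → Ty                            -- recursive type variable X (X = A)
inductive RTy : Type where
  | mk : Ty → (Tm → Assertion) → RTy         -- A | λx. φ(x)
end

def RTy.ty : RTy → Ty | .mk A _ => A
def RTy.pred : RTy → (Tm → Assertion) | .mk _ φ => φ

/-- Contexts of refined-type bindings (telescopes). -/
abbrev Ctx := List (Addr × RTy)

def ctxSat (M : AModel) (ρ : Addr → M.D) : Ctx → Prop
  | [] => True
  | (a, A) :: Γ => (A.pred (Tm.var a)).sat M ρ ∧ ctxSat M ρ Γ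

/-! ## Process syntax -/

inductive Val : Type where
  | unit : Val                 -- ⟨⟩
  | pair : Addr → Addr → Val   -- ⟨s, t⟩
  | tag : Label → Addr → Val   -- ℓ · t

mutual
inductive Proc : Type where
  | copy : Addr → Addr → Proc                 -- t ← s (destination first)
  | cut : (Addr → Proc) → (Addr → Proc) → Proc  -- x ← P(x); Q(x)
  | write : Addr → Val → Proc                  -- t.V
  | caseOf : Addr → Cont → Proc                -- case t K
  | anno : Addr → RTy → Proc → Proc            -- (x : A|φ) :: P
  | call : DefName → List Addr → Addr → Proc   -- f(s̄, t)
inductive Cont : Type where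
  | unit : Proc → Cont                         -- ⟨⟩ ⇒ P
  | pair : (Addr → Addr → Proc) → Cont         -- ⟨x,y⟩ ⇒ P(x,y)
  | branches : (Label → Addr → Proc) → Cont    -- {ℓ·x ⇒ P_ℓ(x)}
end

/-- Telescopes of argument types with a result type, for definition signatures. -/
inductive Tele : Type where
  | ret : RTy → Tele
  | arg : RTy → (Tm → Tele) → Tele

/-- An ambient signature: equirecursive type definitions X = A, an assertion-logic
theory (e.g. axioms for uninterpreted functions), and typed recursive process
definitions f(x̄ : 𝒜̄, y : 𝒞) = P. -/
structure Sig where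
  tydefs : ℕ → Ty
  theory : Set Assertion
  defs : DefName → Option (Tele × (List Addr → Addr → Proc))

/-- Semantic entailment in the assertion logic: truth in all models of the theory. -/
def Entails (Th : Set Assertion) (Γ : Ctx) (φ : Assertion) : Prop :=
  ∀ (M : AModel) (ρ : Addr → M.D), (∀ ψ ∈ Th, ψ.sat M ρ) → ctxSat M ρ Γ → φ.sat M ρ

/-! ## Subtyping (≤Pred, ≤1, ≤⊗, ≤→, ≤⊕, ≤&, and recursive-type unfolding).

Remark: the paper's subtyping is a *mixed inductive-coinductive* system whose
only coinductive premises are those of the recursive-type unfolding rules; we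
present it here as an inference system with the same rules. -/

mutual
inductive Sub (Sg : Sig) : Ctx → Ty → Ty → Prop where
  | unit {Γ : Ctx} : Sub Sg Γ .unit .unit
  | tensor {Γ : Ctx} {A A' : RTy} {C D : Tm → Ty} :
      RSub Sg Γ A A' →
      (∀ a : Addr, Sub Sg ((a, A) :: Γ) (C (Tm.var a)) (D (Tm.var a))) →
      Sub Sg Γ (.tensor A C) (.tensor A' D)
  | arrow {Γ : Ctx} {A A' : RTy} {B B' : Tm → RTy} :
      RSub Sg Γ A A' →
      (∀ a : Addr, RSub Sg ((a, A) :: Γ) (B (Tm.var a)) (B' (Tm.var a))) →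
      Sub Sg Γ (.arrow A' B) (.arrow A B')
  | plus {Γ : Ctx} {S T : List Label} {A B : Label → Ty} :
      S ⊆ T → (∀ ℓ ∈ S, Sub Sg Γ (A ℓ) (B ℓ)) →
      Sub Sg Γ (.plus S A) (.plus T B)
  | withR {Γ : Ctx} {S T : List Label} {A B : Label → RTy} :
      T ⊆ S → (∀ ℓ ∈ T, RSub Sg Γ (A ℓ) (B ℓ)) →
      Sub Sg Γ (.withR S A) (.withR T B)
  | recL {Γ : Ctx} {X : ℕ} {B : Ty} :
      Sub Sg Γ (Sg.tydefs X) B → Sub Sg Γ (.tvar X) B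
  | recR {Γ : Ctx} {X : ℕ} {A : Ty} :
      Sub Sg Γ A (Sg.tydefs X) → Sub Sg Γ A (.tvar X)
inductive RSub (Sg : Sig) : Ctx → RTy → RTy → Prop where
  | pred {Γ : Ctx} {A B : Ty} {φ ψ : Tm → Assertion} :
      Sub Sg Γ A B →
      (∀ a : Addr, Entails Sg.theory ((a, .mk A φ) :: Γ) (ψ (Tm.var a))) →
      RSub Sg Γ (.mk A φ) (.mk B ψ)
end

/-! ## Bidirectional process typing -/

inductive Dir : Type where
  | syn  -- ⇒
  | chk  -- ⇐

structure Jdg where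
  dir : Dir
  addr : Addr
  ty : RTy

abbrev BCtx := List Jdg

def eraseB (Γ : BCtx) : Ctx := Γ.map fun j => (j.addr, j.ty)

/-- Matching a list of argument addresses against a telescope (for definition calls). -/
inductive CallArgs (Γ : BCtx) : List Addr → Tele → RTy → Prop where
  | nil {C : RTy} : CallArgs Γ [] (.ret C) C
  | cons {x : Addr} {xs : List Addr} {A : RTy} {T : Tm → Tele} {C : RTy} :
      (Jdg.mk .chk x A) ∈ Γ → CallArgs Γ xs (T (Tm.var x)) C →
      CallArgs Γ (x :: xs) (.arg A T) C

/-- The conjunction of the component refinements of a lazy record, stated of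
the record's projections (used by &R to verify the record's postcondition). -/
def withAnd (S : List Label) (A : Label → RTy) (t : Tm) : Assertion :=
  S.foldr (fun ℓ acc => .conj ((A ℓ).pred (Tm.proj t ℓ)) acc) .tru

/-- The refinement of an applied function, stated of an address of function type
(used by →R to verify the function's postcondition without reifying its body). -/
def arrowSpec (A : RTy) (B : Tm → RTy) (t : Tm) : Assertion :=
  .all fun v => .impl (A.pred v) ((B v).pred (.app t v))

inductive BTyp (Sg : Sig) : BCtx → Proc → Jdg → Prop where
  -- structural rules
  | weak {Γ : BCtx} {j : Jdg} {P : Proc} {J : Jdg} :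
      BTyp Sg Γ P J → BTyp Sg (j :: Γ) P J
  | exch {Γ Γ' : BCtx} {P : Proc} {J : Jdg} :
      Γ.Perm Γ' → BTyp Sg Γ P J → BTyp Sg Γ' P J
  -- subsumption (≤R / ≤L)
  | subR {Γ : BCtx} {P : Proc} {a : Addr} {A B : RTy} :
      BTyp Sg Γ P ⟨.syn, a, A⟩ → RSub Sg (eraseB Γ) A B → BTyp Sg Γ P ⟨.chk, a, B⟩
  | subL {Γ : BCtx} {P : Proc} {x : Addr} {A B : RTy} {J : Jdg} :
      RSub Sg (eraseB Γ) A B → BTyp Sg (⟨.syn, x, B⟩ :: Γ) P J →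
      BTyp Sg (⟨.chk, x, A⟩ :: Γ) P J
  -- type annotation (AnnoR / AnnoL)
  | annoR {Γ : BCtx} {P : Proc} {a : Addr} {A : RTy} :
      BTyp Sg Γ P ⟨.chk, a, A⟩ → BTyp Sg Γ (.anno a A P) ⟨.syn, a, A⟩
  | annoL {Γ : BCtx} {P : Proc} {x : Addr} {A : RTy} {J : Jdg} :
      BTyp Sg (⟨.chk, x, A⟩ :: Γ) P J → BTyp Sg (⟨.syn, x, A⟩ :: Γ) (.anno x A P) J
  -- cut / snips
  | cutP {Γ : BCtx} {P Q : Addr → Proc} {A : RTy} {J : Jdg} :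
      (∀ a : Addr, BTyp Sg Γ (P a) ⟨.chk, a, A⟩) →
      (∀ a : Addr, BTyp Sg (⟨.syn, a, A⟩ :: Γ) (Q a) J) →
      BTyp Sg Γ (.cut P Q) J
  | cutN {Γ : BCtx} {P Q : Addr → Proc} {A : RTy} {J : Jdg} :
      (∀ a : Addr, BTyp Sg Γ (P a) ⟨.syn, a, A⟩) →
      (∀ a : Addr, BTyp Sg (⟨.chk, a, A⟩ :: Γ) (Q a) J) →
      BTyp Sg Γ (.cut P Q) J
  -- identity
  | idP {Γ : BCtx} {x y : Addr} {A : RTy} :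
      (Jdg.mk .syn x A) ∈ Γ → BTyp Sg Γ (.copy y x) ⟨.chk, y, A⟩
  | idN {Γ : BCtx} {x y : Addr} {A : RTy} :
      (Jdg.mk .chk x A) ∈ Γ → BTyp Sg Γ (.copy y x) ⟨.syn, y, A⟩
  -- unit
  | unitR {Γ : BCtx} {a : Addr} {φ : Tm → Assertion} :
      Entails Sg.theory (eraseB Γ) (φ .unit) →
      BTyp Sg Γ (.write a .unit) ⟨.chk, a, .mk .unit φ⟩
  | unitL {Γ : BCtx} {x : Addr} {φ : Tm → Assertion} {P : Proc} {J : Jdg} :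
      (Jdg.mk .syn x (.mk .unit φ)) ∈ Γ → BTyp Sg Γ P J →
      BTyp Sg Γ (.caseOf x (.unit P)) J
  -- dependent eager pairs
  | tensorR {Γ : BCtx} {x y z : Addr} {A : RTy} {B : Tm → Ty} {ψ : Tm → Assertion} :
      (Jdg.mk .chk x A) ∈ Γ →
      (Jdg.mk .chk y (.mk (B (Tm.var x)) (fun _ => ψ (.pair (.var x) (.var y))))) ∈ Γ →
      BTyp Sg Γ (.write z (.pair x y)) ⟨.chk, z, .mk (.tensor A B) ψ⟩
  | tensorL {Γ : BCtx} {z : Addr} {A : RTy} {B : Tm → Ty} {ψ : Tm → Assertion}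
      {P : Addr → Addr → Proc} {J : Jdg} :
      (Jdg.mk .syn z (.mk (.tensor A B) ψ)) ∈ Γ →
      (∀ x y : Addr, BTyp Sg
        (⟨.syn, x, A⟩ ::
         ⟨.syn, y, .mk (B (Tm.var x)) (fun _ => ψ (.pair (.var x) (.var y)))⟩ ::
         ⟨.syn, z, .mk (.tensor A B)
            (fun t => .conj (ψ t) (.eq t (.pair (.var x) (.var y))))⟩ :: Γ)
        (P x y) J) →
      BTyp Sg Γ (.caseOf z (.pair P)) J
  -- dependent functions
  | arrowR {Γ : BCtx} {z : Addr} {A : RTy} {B : Tm → RTy} {χ : Tm → Assertion}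
      {P : Addr → Addr → Proc} :
      (∀ x y : Addr, BTyp Sg (⟨.syn, x, A⟩ :: Γ) (P x y) ⟨.chk, y, B (Tm.var x)⟩) →
      (∀ a : Addr, Entails Sg.theory
        ((a, .mk (.arrow A B) (arrowSpec A B)) :: eraseB Γ) (χ (Tm.var a))) →
      BTyp Sg Γ (.caseOf z (.pair P)) ⟨.chk, z, .mk (.arrow A B) χ⟩
  | arrowL {Γ : BCtx} {x y z : Addr} {A : RTy} {B : Tm → RTy} {χ : Tm → Assertion} :
      (Jdg.mk .syn z (.mk (.arrow A B) χ)) ∈ Γ →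
      (Jdg.mk .chk x A) ∈ Γ →
      BTyp Sg Γ (.write z (.pair x y)) ⟨.syn, y, B (Tm.var x)⟩
  -- labelled sums
  | plusR {Γ : BCtx} {x y : Addr} {k : Label} {S : List Label} {A : Label → Ty}
      {φ : Tm → Assertion} :
      k ∈ S →
      (Jdg.mk .chk x (.mk (A k) (fun _ => φ (.tag k (.var x))))) ∈ Γ →
      BTyp Sg Γ (.write y (.tag k x)) ⟨.chk, y, .mk (.plus S A) φ⟩
  | plusL {Γ : BCtx} {y : Addr} {S : List Label} {A : Label → Ty} {φ : Tm → Assertion}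
      {P : Label → Addr → Proc} {J : Jdg} :
      (Jdg.mk .syn y (.mk (.plus S A) φ)) ∈ Γ →
      (∀ k ∈ S, ∀ x : Addr, BTyp Sg
        (⟨.syn, x, .mk (A k) (fun _ => φ (.tag k (.var x)))⟩ ::
         ⟨.syn, y, .mk (.plus S A)
            (fun t => .conj (φ t) (.eq t (.tag k (.var x))))⟩ :: Γ)
        (P k x) J) →
      BTyp Sg Γ (.caseOf y (.branches P)) J
  -- lazy records
  | withRR {Γ : BCtx} {y : Addr} {S : List Label} {A : Label → RTy} {ψ : Tm → Assertion}
      {P : Label → Addr → Proc} :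
      (∀ k ∈ S, ∀ x : Addr, BTyp Sg Γ (P k x) ⟨.chk, x, A k⟩) →
      (∀ a : Addr, Entails Sg.theory
        ((a, .mk (.withR S A) (withAnd S A)) :: eraseB Γ) (ψ (Tm.var a))) →
      BTyp Sg Γ (.caseOf y (.branches P)) ⟨.chk, y, .mk (.withR S A) ψ⟩
  | withL {Γ : BCtx} {x y : Addr} {k : Label} {S : List Label} {A : Label → RTy}
      {ψ : Tm → Assertion} :
      k ∈ S →
      (Jdg.mk .syn y (.mk (.withR S A) ψ)) ∈ Γ →
      BTyp Sg Γ (.write y (.tag k x)) ⟨.syn, x, A k⟩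
  -- definition calls (assume–guarantee: the call outputs its ascribed signature)
  | call {Γ : BCtx} {f : DefName} {xs : List Addr} {y : Addr}
      {T : Tele} {body : List Addr → Addr → Proc} {C : RTy} :
      Sg.defs f = some (T, body) → CallArgs Γ xs T C →
      BTyp Sg Γ (.call f xs y) ⟨.syn, y, C⟩

/-- The context and result type induced by a telescope at given argument addresses. -/
def teleCtxB : List Addr → Tele → Option (BCtx × RTy)
  | [], .ret C => some ([], C)
  | x :: xs, .arg A T =>
      (teleCtxB xs (T (Tm.var x))).map fun p => (⟨.syn, x, A⟩ :: p.1, p.2)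
  | _, _ => none

/-- Well-formedness of the signature: each definition body checks against the
definition's ascribed signature.  Since recursive calls are typed by the `call`
axiom (assume–guarantee), this captures the circular (mixed inductive-coinductive)
typing of recursive definitions. -/
def SigWF (Sg : Sig) : Prop :=
  ∀ f T body, Sg.defs f = some (T, body) →
    ∀ (xs : List Addr) (y : Addr) (Γ : BCtx) (C : RTy),
      (y :: xs).Nodup → teleCtxB xs T = some (Γ, C) →
      BTyp Sg Γ (body xs y) ⟨.chk, y, C⟩

/-! ## Non-bidirectional typing: directions collapsed to (:), annotation rules removed -/

inductive CallArgsN (Γ : Ctx) : List Addr → Tele → RTy → Prop where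
  | nil {C : RTy} : CallArgsN Γ [] (.ret C) C
  | cons {x : Addr} {xs : List Addr} {A : RTy} {T : Tm → Tele} {C : RTy} :
      (x, A) ∈ Γ → CallArgsN Γ xs (T (Tm.var x)) C →
      CallArgsN Γ (x :: xs) (.arg A T) C

inductive NTyp (Sg : Sig) : Ctx → Proc → Addr × RTy → Prop where
  | weak {Γ : Ctx} {b : Addr × RTy} {P : Proc} {J : Addr × RTy} :
      NTyp Sg Γ P J → NTyp Sg (b :: Γ) P J
  | exch {Γ Γ' : Ctx} {P : Proc} {J : Addr × RTy} :
      Γ.Perm Γ' → NTyp Sg Γ P J → NTyp Sg Γ' P J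
  | subR {Γ : Ctx} {P : Proc} {a : Addr} {A B : RTy} :
      NTyp Sg Γ P (a, A) → RSub Sg Γ A B → NTyp Sg Γ P (a, B)
  | subL {Γ : Ctx} {P : Proc} {x : Addr} {A B : RTy} {J : Addr × RTy} :
      RSub Sg Γ A B → NTyp Sg ((x, B) :: Γ) P J → NTyp Sg ((x, A) :: Γ) P J
  | cutP {Γ : Ctx} {P Q : Addr → Proc} {A : RTy} {J : Addr × RTy} :
      (∀ a : Addr, NTyp Sg Γ (P a) (a, A)) →
      (∀ a : Addr, NTyp Sg ((a, A) :: Γ) (Q a) J) →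
      NTyp Sg Γ (.cut P Q) J
  | idP {Γ : Ctx} {x y : Addr} {A : RTy} :
      (x, A) ∈ Γ → NTyp Sg Γ (.copy y x) (y, A)
  | unitR {Γ : Ctx} {a : Addr} {φ : Tm → Assertion} :
      Entails Sg.theory Γ (φ .unit) →
      NTyp Sg Γ (.write a .unit) (a, .mk .unit φ)
  | unitL {Γ : Ctx} {x : Addr} {φ : Tm → Assertion} {P : Proc} {J : Addr × RTy} :
      (x, RTy.mk .unit φ) ∈ Γ → NTyp Sg Γ P J →
      NTyp Sg Γ (.caseOf x (.unit P)) J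
  | tensorR {Γ : Ctx} {x y z : Addr} {A : RTy} {B : Tm → Ty} {ψ : Tm → Assertion} :
      (x, A) ∈ Γ →
      (y, RTy.mk (B (Tm.var x)) (fun _ => ψ (.pair (.var x) (.var y)))) ∈ Γ →
      NTyp Sg Γ (.write z (.pair x y)) (z, .mk (.tensor A B) ψ)
  | tensorL {Γ : Ctx} {z : Addr} {A : RTy} {B : Tm → Ty} {ψ : Tm → Assertion}
      {P : Addr → Addr → Proc} {J : Addr × RTy} :
      (z, RTy.mk (.tensor A B) ψ) ∈ Γ →
      (∀ x y : Addr, NTyp Sg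
        ((x, A) ::
         (y, RTy.mk (B (Tm.var x)) (fun _ => ψ (.pair (.var x) (.var y)))) ::
         (z, RTy.mk (.tensor A B)
            (fun t => .conj (ψ t) (.eq t (.pair (.var x) (.var y))))) :: Γ)
        (P x y) J) →
      NTyp Sg Γ (.caseOf z (.pair P)) J
  | arrowR {Γ : Ctx} {z : Addr} {A : RTy} {B : Tm → RTy} {χ : Tm → Assertion}
      {P : Addr → Addr → Proc} :
      (∀ x y : Addr, NTyp Sg ((x, A) :: Γ) (P x y) (y, B (Tm.var x))) →
      (∀ a : Addr, Entails Sg.theory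
        ((a, .mk (.arrow A B) (arrowSpec A B)) :: Γ) (χ (Tm.var a))) →
      NTyp Sg Γ (.caseOf z (.pair P)) (z, .mk (.arrow A B) χ)
  | arrowL {Γ : Ctx} {x y z : Addr} {A : RTy} {B : Tm → RTy} {χ : Tm → Assertion} :
      (z, RTy.mk (.arrow A B) χ) ∈ Γ →
      (x, A) ∈ Γ →
      NTyp Sg Γ (.write z (.pair x y)) (y, B (Tm.var x))
  | plusR {Γ : Ctx} {x y : Addr} {k : Label} {S : List Label} {A : Label → Ty}
      {φ : Tm → Assertion} :
      k ∈ S →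
      (x, RTy.mk (A k) (fun _ => φ (.tag k (.var x)))) ∈ Γ →
      NTyp Sg Γ (.write y (.tag k x)) (y, .mk (.plus S A) φ)
  | plusL {Γ : Ctx} {y : Addr} {S : List Label} {A : Label → Ty} {φ : Tm → Assertion}
      {P : Label → Addr → Proc} {J : Addr × RTy} :
      (y, RTy.mk (.plus S A) φ) ∈ Γ →
      (∀ k ∈ S, ∀ x : Addr, NTyp Sg
        ((x, RTy.mk (A k) (fun _ => φ (.tag k (.var x)))) ::
         (y, RTy.mk (.plus S A)
            (fun t => .conj (φ t) (.eq t (.tag k (.var x))))) :: Γ)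
        (P k x) J) →
      NTyp Sg Γ (.caseOf y (.branches P)) J
  | withRR {Γ : Ctx} {y : Addr} {S : List Label} {A : Label → RTy} {ψ : Tm → Assertion}
      {P : Label → Addr → Proc} :
      (∀ k ∈ S, ∀ x : Addr, NTyp Sg Γ (P k x) (x, A k)) →
      (∀ a : Addr, Entails Sg.theory
        ((a, .mk (.withR S A) (withAnd S A)) :: Γ) (ψ (Tm.var a))) →
      NTyp Sg Γ (.caseOf y (.branches P)) (y, .mk (.withR S A) ψ)
  | withL {Γ : Ctx} {x y : Addr} {k : Label} {S : List Label} {A : Label → RTy}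
      {ψ : Tm → Assertion} :
      k ∈ S →
      (y, RTy.mk (.withR S A) ψ) ∈ Γ →
      NTyp Sg Γ (.write y (.tag k x)) (x, A k)
  | call {Γ : Ctx} {f : DefName} {xs : List Addr} {y : Addr}
      {T : Tele} {body : List Addr → Addr → Proc} {C : RTy} :
      Sg.defs f = some (T, body) → CallArgsN Γ xs T C →
      NTyp Sg Γ (.call f xs y) (y, C)

def teleCtxN : List Addr → Tele → Option (Ctx × RTy)
  | [], .ret C => some ([], C)
  | x :: xs, .arg A T =>
      (teleCtxN xs (T (Tm.var x))).map fun p => ((x, A) :: p.1, p.2)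
  | _, _ => none

def NSigWF (Sg : Sig) : Prop :=
  ∀ f T body, Sg.defs f = some (T, body) →
    ∀ (xs : List Addr) (y : Addr) (Γ : Ctx) (C : RTy),
      (y :: xs).Nodup → teleCtxN xs T = some (Γ, C) →
      NTyp Sg Γ (body xs y) (y, C)

/-! ## Erasure of type annotations and of directions -/

mutual
def Proc.erase : Proc → Proc
  | .copy a b => .copy a b
  | .cut P Q => .cut (fun x => Proc.erase (P x)) (fun x => Proc.erase (Q x))
  | .write a V => .write a V
  | .caseOf a K => .caseOf a (Cont.erase K)
  | .anno _ _ P => Proc.erase P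
  | .call f xs y => .call f xs y
def Cont.erase : Cont → Cont
  | .unit P => .unit (Proc.erase P)
  | .pair P => .pair (fun x y => Proc.erase (P x y))
  | .branches P => .branches (fun k x => Proc.erase (P k x))
end

def Jdg.erase (j : Jdg) : Addr × RTy := (j.addr, j.ty)

/-! ## Configurations, reduction, and configuration typing -/

inductive Obj : Type where
  | proc : Addr → Proc → Obj     -- proc(a, P)
  | cellV : Addr → Val → Obj     -- !cell(a, V)
  | cellK : Addr → Cont → Obj    -- !cell(a, K)

abbrev Config := Multiset Obj

def Obj.dest : Obj → Addr
  | .proc a _ => a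
  | .cellV a _ => a
  | .cellK a _ => a

/-- Passing a value to a continuation: V ▷ K. -/
def Val.pass : Val → Cont → Option Proc
  | .unit, .unit P => some P
  | .pair a b, .pair P => some (P a b)
  | .tag k a, .branches P => some (P k a)
  | _, _ => none

inductive Step (Sg : Sig) : Config → Config → Prop where
  | copyV {a b : Addr} {V : Val} {C : Config} :
      Step Sg (.cellV a V ::ₘ .proc b (.copy b a) ::ₘ C)
              (.cellV a V ::ₘ .cellV b V ::ₘ C)
  | copyK {a b : Addr} {K : Cont} {C : Config} :
      Step Sg (.cellK a K ::ₘ .proc b (.copy b a) ::ₘ C)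
              (.cellK a K ::ₘ .cellK b K ::ₘ C)
  | cut {a c : Addr} {P Q : Addr → Proc} {C : Config} :
      (∀ o ∈ (Obj.proc c (.cut P Q) ::ₘ C), Obj.dest o ≠ a) →
      Step Sg (.proc c (.cut P Q) ::ₘ C)
              (.proc a (P a) ::ₘ .proc c (Q a) ::ₘ C)
  | passV {a c : Addr} {V : Val} {K : Cont} {P : Proc} {C : Config} :
      V.pass K = some P →
      Step Sg (.cellK a K ::ₘ .proc c (.write a V) ::ₘ C)
              (.cellK a K ::ₘ .proc c P ::ₘ C)
  | matchV {a c : Addr} {V : Val} {K : Cont} {P : Proc} {C : Config} :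
      V.pass K = some P →
      Step Sg (.cellV a V ::ₘ .proc c (.caseOf a K) ::ₘ C)
              (.cellV a V ::ₘ .proc c P ::ₘ C)
  | call {a : Addr} {f : DefName} {xs : List Addr}
      {T : Tele} {body : List Addr → Addr → Proc} {C : Config} :
      Sg.defs f = some (T, body) →
      Step Sg (.proc a (.call f xs a) ::ₘ C) (.proc a (body xs a) ::ₘ C)
  | anno {a x : Addr} {A : RTy} {P : Proc} {C : Config} :
      Step Sg (.proc a (.anno x A P) ::ₘ C) (.proc a P ::ₘ C)
  | writeV {a : Addr} {V : Val} {C : Config} :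
      Step Sg (.proc a (.write a V) ::ₘ C) (.cellV a V ::ₘ C)
  | writeK {a : Addr} {K : Cont} {C : Config} :
      Step Sg (.proc a (.caseOf a K) ::ₘ C) (.cellK a K ::ₘ C)

/-- A final configuration consists only of cells. -/
def Config.Final (C : Config) : Prop := ∀ o ∈ C, ∀ (a : Addr) (P : Proc), o ≠ Obj.proc a P

/-- Context subtyping: contexts viewed as iterated dependent pair types. -/
inductive CtxSub (Sg : Sig) : Ctx → Ctx → Prop where
  | nil : CtxSub Sg [] []
  | cons {a : Addr} {A B : RTy} {Δ Γ : Ctx} :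
      RSub Sg Γ A B → CtxSub Sg Δ Γ → CtxSub Sg ((a, A) :: Δ) ((a, B) :: Γ)

/-- Configuration typing Γ ⊢ C ÷ Δ, with subtyping slack in the `proc` rule. -/
inductive CTyp (Sg : Sig) : Ctx → Config → Ctx → Prop where
  | empty {Γ : Ctx} : CTyp Sg Γ 0 Γ
  | join {Γ Γ' Δ : Ctx} {C C' : Config} :
      CTyp Sg Γ C Γ' → CTyp Sg Γ' C' Δ → CTyp Sg Γ (C + C') Δ
  | proc {Δ Γ : Ctx} {P : Proc} {a : Addr} {A B : RTy} :
      CtxSub Sg Δ Γ → NTyp Sg Γ P (a, A) → RSub Sg Γ A B →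
      CTyp Sg Δ {Obj.proc a P} ((a, B) :: Δ)
  | cellV {Γ Δ : Ctx} {a : Addr} {V : Val} :
      CTyp Sg Γ {Obj.proc a (.write a V)} Δ → CTyp Sg Γ {Obj.cellV a V} Δ
  | cellK {Γ Δ : Ctx} {a : Addr} {K : Cont} :
      CTyp Sg Γ {Obj.proc a (.caseOf a K)} Δ → CTyp Sg Γ {Obj.cellK a K} Δ

/-! ## Purely positive types, observable satisfaction, and safety -/

inductive PurelyPos (Sg : Sig) : Ty → Prop where
  | unit : PurelyPos Sg .unit
  | tensor {A : RTy} {B : Tm → Ty} :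
      PurelyPos Sg A.ty → (∀ t : Tm, PurelyPos Sg (B t)) → PurelyPos Sg (.tensor A B)
  | plus {S : List Label} {A : Label → Ty} :
      (∀ ℓ ∈ S, PurelyPos Sg (A ℓ)) → PurelyPos Sg (.plus S A)
  | tvar {X : ℕ} : PurelyPos Sg (Sg.tydefs X) → PurelyPos Sg (.tvar X)

def PurelyPosCtx (Sg : Sig) (Γ : Ctx) : Prop := ∀ p ∈ Γ, PurelyPos Sg (Prod.snd p).ty

/-- The first-order term denoted by a stored value. -/
def Val.tm : Val → Tm
  | .unit => .unit
  | .pair a b => .pair (.var a) (.var b)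
  | .tag k a => .tag k (.var a)

/-- Observable satisfaction F ⊨ Γ⁺⁺. -/
inductive OSat (Sg : Sig) : Config → Ctx → Prop where
  | nil : OSat Sg 0 []
  | cons {F : Config} {Γ : Ctx} {a : Addr} {V : Val} {A : RTy} :
      OSat Sg F Γ → Entails Sg.theory Γ (A.pred V.tm) →
      OSat Sg (Obj.cellV a V ::ₘ F) ((a, A) :: Γ)

/-- A final configuration is Γ-safe when every purely positive subcontext of Γ is
observably satisfied by some subconfiguration. -/
def FinalSafe (Sg : Sig) (F : Config) (Γ : Ctx) : Prop :=
  ∀ Γpp : Ctx, Γpp.Sublist Γ → PurelyPosCtx Sg Γpp → ∃ F' : Config, F' ≤ F ∧ OSat Sg F' Γpp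

/-- One step of the coinductive safety predicate. -/
def SafeStep (Sg : Sig) (Γ : Ctx) (X : Set Config) : Set Config :=
  {C | (C.Final ∧ FinalSafe Sg C Γ) ∨
       ((∃ C', Step Sg C C') ∧ ∀ C', Step Sg C C' → C' ∈ X)}

/-- Γ-safety: the greatest fixed point of `SafeStep` (coinductively defined). -/
def Safe (Sg : Sig) (Γ : Ctx) : Set Config := ⋃₀ {X : Set Config | X ⊆ SafeStep Sg Γ X}

/-! ## Heads of types (for inversion modulo subtyping) -/

inductive Head : Type where
  | unit | tensor | plus | arrow | withR

inductive HasHead (Sg : Sig) : Ty → Head → Prop where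
  | unit : HasHead Sg .unit .unit
  | tensor {A : RTy} {B : Tm → Ty} : HasHead Sg (.tensor A B) .tensor
  | plus {S : List Label} {A : Label → Ty} : HasHead Sg (.plus S A) .plus
  | arrow {A : RTy} {B : Tm → RTy} : HasHead Sg (.arrow A B) .arrow
  | withR {S : List Label} {A : Label → RTy} : HasHead Sg (.withR S A) .withR
  | tvar {X : ℕ} {h : Head} : HasHead Sg (Sg.tydefs X) h → HasHead Sg (.tvar X) h

/-- Contractiveness of the recursive type definitions: every definition unfolds
to a structural type constructor. -/
def Contractive (Sg : Sig) : Prop := ∀ X : ℕ, ∃ h, HasHead Sg (Sg.tydefs X) h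

lemma mem_eraseB {Γ : BCtx} {j : Jdg} (h : j ∈ Γ) : (j.addr, j.ty) ∈ eraseB Γ :=
  List.mem_map_of_mem h

lemma callArgs_erase {Γ : BCtx} {xs : List Addr} {T : Tele} {C : RTy}
    (h : CallArgs Γ xs T C) : CallArgsN (eraseB Γ) xs T C := by
  induction h with
  | nil => exact .nil
  | cons hmem _ ih => exact .cons (mem_eraseB hmem) ih

/-- Soundness of bidirectional typing: if Γ ⊢ P ÷ J bidirectionally,
then |Γ| ⊢ |P| ÷ |J| in the non-bidirectional system (annotations erased,
directions collapsed to a single colon-typing judgment). -/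
theorem bidir_sound (Sg : Sig) (Γ : BCtx) (P : Proc) (J : Jdg)
    (h : BTyp Sg Γ P J) : NTyp Sg (eraseB Γ) P.erase J.erase := by
  induction h with
  | weak _ ih => exact NTyp.weak ih
  | exch hperm _ ih => exact NTyp.exch (List.Perm.map _ hperm) ih
  | subR _ hsub ih => exact NTyp.subR ih hsub
  | subL hsub _ ih => exact NTyp.subL hsub ih
  | annoR _ ih => simpa [Proc.erase, Jdg.erase] using ih
  | annoL _ ih => simpa [Proc.erase, eraseB] using ih
  | cutP _ _ ihP ihQ =>
      simp only [Proc.erase]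
      exact NTyp.cutP (fun a => ihP a) (fun a => ihQ a)
  | cutN _ _ ihP ihQ =>
      simp only [Proc.erase]
      exact NTyp.cutP (fun a => ihP a) (fun a => ihQ a)
  | idP hmem => exact NTyp.idP (mem_eraseB hmem)
  | idN hmem => exact NTyp.idP (mem_eraseB hmem)
  | unitR hent => exact NTyp.unitR hent
  | unitL hmem _ ih => exact NTyp.unitL (mem_eraseB hmem) ih
  | tensorR hx hy => exact NTyp.tensorR (mem_eraseB hx) (mem_eraseB hy)
  | tensorL hmem _ ih =>
      exact NTyp.tensorL (mem_eraseB hmem) (fun x y => ih x y)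
  | arrowR _ hent ih => exact NTyp.arrowR (fun x y => ih x y) hent
  | arrowL hz hx => exact NTyp.arrowL (mem_eraseB hz) (mem_eraseB hx)
  | plusR hk hx => exact NTyp.plusR hk (mem_eraseB hx)
  | plusL hmem _ ih =>
      exact NTyp.plusL (mem_eraseB hmem) (fun k hk x => ih k hk x)
  | withRR _ hent ih => exact NTyp.withRR (fun k hk x => ih k hk x) hent
  | withL hk hmem => exact NTyp.withL hk (mem_eraseB hmem)
  | call hdef hargs => exact NTyp.call hdef (callArgs_erase hargs)

end DRSAX
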